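/- Let U be a Hilbert space, Q : U → U* a bounded symmetric operator with closed image, and a ∈ U* nonzero. Then the set L = {(δp, δq) ∈ ℝ² : ∃ v ∈ U, Q v = δp·a and δq = ⟨a, v⟩} is a one-dimensional (Lagrangian) subspace of ℝ². Specifically: if a ∈ im Q then L = span{(1, ⟨a, Q⁻¹a⟩)} (pseudo-inverse), and if a ∉ im Q then L = span{(0, ⟨a, v⟩)} for some v ∈ ker Q with ⟨a,v⟩ ≠ 0. -/

import Mathlib

open Module RealInnerProductSpace

/-- The `L`-derivative subspace for `M = ℝ`:
`L = {(δp, δq) : ∃ v, Q v = δp · a and δq = ⟨a, v⟩} ⊆ ℝ²`. -/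
def Lderiv {U : Type*} [NormedAddCommGroup U] [InnerProductSpace ℝ U]
    (Q : U →L[ℝ] (U →L[ℝ] ℝ)) (a : U →L[ℝ] ℝ) : Submodule ℝ (ℝ × ℝ) where
  carrier := {x | ∃ v : U, Q v = x.1 • a ∧ x.2 = a v}
  add_mem' := by
    rintro ⟨p₁, q₁⟩ ⟨p₂, q₂⟩ ⟨v₁, hv₁, hq₁⟩ ⟨v₂, hv₂, hq₂⟩
    refine ⟨v₁ + v₂, by simp [hv₁, hv₂, add_smul], ?_⟩
    show q₁ + q₂ = a (v₁ + v₂)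
    rw [map_add]
    exact congrArg₂ (· + ·) hq₁ hq₂
  zero_mem' := ⟨0, by simp, by simp⟩
  smul_mem' := by
    rintro c ⟨p, q⟩ ⟨v, hv, hq⟩
    refine ⟨c • v, by simp [hv, smul_smul], ?_⟩
    show c • q = a (c • v)
    rw [map_smul, ← hq]

theorem Lderiv_mem {U : Type*} [NormedAddCommGroup U] [InnerProductSpace ℝ U]
    (Q : U →L[ℝ] (U →L[ℝ] ℝ)) (a : U →L[ℝ] ℝ) (x : ℝ × ℝ) :
    x ∈ Lderiv Q a ↔ ∃ v : U, Q v = x.1 • a ∧ x.2 = a v := Iff.rfl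

theorem Lderiv_span_of_inv {U : Type*} [NormedAddCommGroup U] [InnerProductSpace ℝ U]
    (Q : U →L[ℝ] (U →L[ℝ] ℝ)) (hQsymm : ∀ x y : U, Q x y = Q y x)
    (a : U →L[ℝ] ℝ) (v₀ : U) (hv₀ : Q v₀ = a) :
    Lderiv Q a = Submodule.span ℝ {((1 : ℝ), a v₀)} := by
  ext ⟨p, q⟩
  rw [Submodule.mem_span_singleton, Lderiv_mem]
  constructor
  · rintro ⟨v, hv, hq⟩
    refine ⟨p, ?_⟩
    have hker : Q (v - p • v₀) = 0 := by
      simp [map_sub, hv, hv₀]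
    have h0 : a (v - p • v₀) = 0 := by
      rw [← hv₀]; rw [hQsymm]
      simp [hker]
    have h1 : a v = p * a v₀ := by
      have := h0
      simp only [map_sub, map_smul, smul_eq_mul, sub_eq_zero] at this
      exact this
    have hq2 : q = a v := hq
    simp only [Prod.smul_mk, smul_eq_mul, mul_one, Prod.mk.injEq]
    exact ⟨trivial, by rw [hq2, h1]⟩
  · rintro ⟨c, hc⟩
    refine ⟨c • v₀, ?_, ?_⟩
    · have : p = c := by
        have := congrArg Prod.fst hc
        simpa using this.symm
      simp [this, hv₀]
    · have := congrArg Prod.snd hc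
      simp at this
      simp [← this, mul_comm]

theorem Lderiv_span_of_ker {U : Type*} [NormedAddCommGroup U] [InnerProductSpace ℝ U]
    (Q : U →L[ℝ] (U →L[ℝ] ℝ))
    (a : U →L[ℝ] ℝ) (hna : ¬ ∃ v₀ : U, Q v₀ = a)
    (v : U) (hv : Q v = 0) (hav : a v ≠ 0) :
    Lderiv Q a = Submodule.span ℝ {((0 : ℝ), a v)} := by
  ext ⟨p, q⟩
  rw [Submodule.mem_span_singleton, Lderiv_mem]
  constructor
  · rintro ⟨w, hw, hq⟩
    have hp : p = 0 := by
      by_contra hp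
      exact hna ⟨p⁻¹ • w, by simp [hw, smul_smul, inv_mul_cancel₀ hp]⟩
    refine ⟨q / a v, ?_⟩
    simp [Prod.ext_iff, hp, div_mul_cancel₀ _ hav]
  · rintro ⟨c, hc⟩
    refine ⟨c • v, ?_, ?_⟩
    · have : p = 0 := by
        have := congrArg Prod.fst hc; simpa using this.symm
      simp [this, hv]
    · have := congrArg Prod.snd hc
      simp at this
      simp [← this, mul_comm]

theorem exists_ker_of_not_range {U : Type*}
    [NormedAddCommGroup U] [InnerProductSpace ℝ U] [CompleteSpace U]
    (Q : U →L[ℝ] (U →L[ℝ] ℝ))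
    (hQsymm : ∀ x y : U, Q x y = Q y x)
    (hclosed : IsClosed (Set.range fun v : U => Q v))
    (a : U →L[ℝ] ℝ) (hna : ¬ ∃ v₀ : U, Q v₀ = a) :
    ∃ v : U, Q v = 0 ∧ a v ≠ 0 := by
  set D := InnerProductSpace.toDual ℝ U with hD
  set S : Submodule ℝ U :=
    { carrier := {w | ∃ u, Q u = D w}
      add_mem' := by
        rintro w₁ w₂ ⟨u₁, hu₁⟩ ⟨u₂, hu₂⟩
        exact ⟨u₁ + u₂, by simp [hu₁, hu₂]⟩
      zero_mem' := ⟨0, by simp⟩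
      smul_mem' := by
        rintro c w ⟨u, hu⟩
        exact ⟨c • u, by simp [hu]⟩ } with hS
  have hSmem : ∀ w : U, w ∈ S ↔ ∃ u, Q u = D w := fun w => Iff.rfl
  have hSclosed : IsClosed (S : Set U) := by
    have : (S : Set U) = ⇑D ⁻¹' (Set.range fun v : U => Q v) := by
      ext w
      simp [hSmem, Set.mem_preimage, Set.mem_range, eq_comm]
    rw [this]
    exact hclosed.preimage D.continuous
  haveI : CompleteSpace S := hSclosed.completeSpace_coe
  set w₀ : U := D.symm a with hw₀
  have hw₀S : w₀ ∉ S := by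
    rintro ⟨u, hu⟩
    exact hna ⟨u, by rw [hu, hw₀]; exact D.apply_symm_apply a⟩
  set v : U := w₀ - S.orthogonalProjection w₀ with hv
  have hvS : v ∈ Sᗮ := Submodule.sub_starProjection_mem_orthogonal (K := S) w₀
  have hvne : v ≠ 0 := by
    intro h
    apply hw₀S
    have : w₀ = (S.orthogonalProjection w₀ : U) := by
      rwa [hv, sub_eq_zero] at h
    rw [this]
    exact (S.orthogonalProjection w₀).2
  refine ⟨v, ?_, ?_⟩
  · ext u
    rw [hQsymm]
    have hmem : D.symm (Q u) ∈ S := ⟨u, by simp⟩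
    have h0 := hvS _ hmem
    rw [InnerProductSpace.toDual_symm_apply] at h0
    simpa using h0
  · have h1 : a v = ⟪w₀, v⟫ := by
      rw [hw₀]
      rw [← InnerProductSpace.toDual_symm_apply]
    have h2 : ⟪w₀, v⟫ = ⟪v, v⟫ := by
      have : w₀ = v + (S.orthogonalProjection w₀ : U) := by rw [hv]; abel
      rw [this, inner_add_left]
      have : ⟪((S.orthogonalProjection w₀ : U)), v⟫ = 0 :=
        hvS _ (S.orthogonalProjection w₀).2
      rw [this, add_zero]
    rw [h1, h2]
    simpa using hvne

/-- if `Q : U → U*` is a bounded symmetric operator with closed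
image on a Hilbert space `U` and `a ∈ U*` is nonzero, then `L` is a
one-dimensional (Lagrangian) subspace of `ℝ²`; explicitly,
`L = span {(1, ⟨a, Q⁻¹ a⟩)}` if `a ∈ im Q` and `L = span {(0, ⟨a, v⟩)}` for
some `v ∈ ker Q` with `⟨a, v⟩ ≠ 0` otherwise. -/
theorem Lderiv_one_dimensional {U : Type*}
    [NormedAddCommGroup U] [InnerProductSpace ℝ U] [CompleteSpace U]
    (Q : U →L[ℝ] (U →L[ℝ] ℝ))
    (hQsymm : ∀ x y : U, Q x y = Q y x)
    (hclosed : IsClosed (Set.range fun v : U => Q v))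
    (a : U →L[ℝ] ℝ) (ha : a ≠ 0) :
    finrank ℝ (Lderiv Q a) = 1 ∧
    (∀ v₀ : U, Q v₀ = a →
      Lderiv Q a = Submodule.span ℝ {((1 : ℝ), a v₀)}) ∧
    ((¬ ∃ v₀ : U, Q v₀ = a) →
      ∃ v : U, Q v = 0 ∧ a v ≠ 0 ∧
        Lderiv Q a = Submodule.span ℝ {((0 : ℝ), a v)}) := by
  refine ⟨?_, fun v₀ hv₀ => Lderiv_span_of_inv Q hQsymm a v₀ hv₀, fun hna => ?_⟩
  · by_cases h : ∃ v₀, Q v₀ = a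
    · obtain ⟨v₀, hv₀⟩ := h
      rw [Lderiv_span_of_inv Q hQsymm a v₀ hv₀]
      exact finrank_span_singleton (by simp [Prod.ext_iff])
    · obtain ⟨v, hv, hav⟩ := exists_ker_of_not_range Q hQsymm hclosed a h
      rw [Lderiv_span_of_ker Q a h v hv hav]
      exact finrank_span_singleton (by simp [Prod.ext_iff, hav])
  · obtain ⟨v, hv, hav⟩ := exists_ker_of_not_range Q hQsymm hclosed a hna
    exact ⟨v, hv, hav, Lderiv_span_of_ker Q a hna v hv hav⟩
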